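/- Let (G,𝓕) be a B_n-generalized pseudo-Kähler structure on an odd exact Courant algebroid E over an n-dimensional manifold M. Then any two B_n-Kähler generalized connections D, D̃ (i.e. torsion-free generalized connections with DG=0 and D𝓕=0) are related by D̃ = D + Re(sk(η₊ + η₋)) for some η_± ∈ Γ(S²E_{±,𝓕}* ⊗ Ē_{±,𝓕}*), where E_{±,𝓕} := E_±^ℂ ∩ L. -/

import Mathlib

/-! Common framework: Courant algebroids over a smooth manifold, described through
their fibers, their (smooth) sections, scalar product, anchor and Dorfman bracket;
generalized connections, torsion, generalized metrics, `Bₙ`-generalized almost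
complex structures on odd exact Courant algebroids, and generalized complex
structures on Courant algebroids of even rank. -/

open Manifold

noncomputable section

/-- A bilinear symmetric form on a real vector space has signature `(p, q)`. -/
def BilinSignature {V : Type*} [AddCommGroup V] [Module ℝ V]
    (g : V →ₗ[ℝ] V →ₗ[ℝ] ℝ) (p q : ℕ) : Prop :=
  ∃ P N : Submodule ℝ V, IsCompl P N ∧
    (∀ v ∈ P, ∀ w ∈ N, g v w = 0) ∧
    Module.finrank ℝ P = p ∧ Module.finrank ℝ N = q ∧
    (∀ v ∈ P, v ≠ 0 → 0 < g v v) ∧ (∀ v ∈ N, v ≠ 0 → g v v < 0)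

/-- The derivative `(π(u)f)(x)` of a function `f` in the direction of a tangent vector. -/
def mdirDeriv {m : ℕ} {M : Type*} [TopologicalSpace M]
    [ChartedSpace (EuclideanSpace ℝ (Fin m)) M]
    [IsManifold (𝓡 m) ((⊤ : ℕ∞) : WithTop ℕ∞) M]
    (f : M → ℝ) (x : M) (v : TangentSpace (𝓡 m) x) : ℝ :=
  mfderiv (𝓡 m) 𝓘(ℝ, ℝ) f x v

/-- A Courant algebroid over an `m`-dimensional manifold `M`, presented by the data of
its fibers, its smooth sections, its fiberwise scalar product `⟨·,·⟩`, its anchor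
`π : E → TM` and its (Dorfman) bracket `[·,·]` on sections, subject to the axioms
`[u,[v,w]] = [[u,v],w] + [v,[u,w]]`, `[u,fv] = f[u,v] + (π(u)f)v`,
`π(u)⟨v,w⟩ = ⟨[u,v],w⟩ + ⟨v,[u,w]⟩` and `⟨[u,v]+[v,u],w⟩ = π(w)⟨u,v⟩`. -/
structure CourantAlgebroid (m : ℕ) (M : Type*) [TopologicalSpace M]
    [ChartedSpace (EuclideanSpace ℝ (Fin m)) M]
    [IsManifold (𝓡 m) ((⊤ : ℕ∞) : WithTop ℕ∞) M] where
  /-- the fiber of the vector bundle `E` at `x ∈ M` -/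
  Fib : M → Type
  [fibAdd : ∀ x, AddCommGroup (Fib x)]
  [fibMod : ∀ x, Module ℝ (Fib x)]
  [fibFin : ∀ x, FiniteDimensional ℝ (Fib x)]
  /-- the set `Γ(E)` of smooth sections of `E` -/
  secs : Set (∀ x, Fib x)
  secs_zero : (fun x => (0 : Fib x)) ∈ secs
  secs_add : ∀ {u v}, u ∈ secs → v ∈ secs → (fun x => u x + v x) ∈ secs
  secs_neg : ∀ {u}, u ∈ secs → (fun x => -(u x)) ∈ secs
  secs_smul : ∀ {f : M → ℝ}, ContMDiff (𝓡 m) 𝓘(ℝ, ℝ) (⊤ : ℕ∞) f →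
    ∀ {u}, u ∈ secs → (fun x => f x • u x) ∈ secs
  /-- the scalar product `⟨·,·⟩` -/
  g : ∀ x, Fib x →ₗ[ℝ] Fib x →ₗ[ℝ] ℝ
  g_symm : ∀ x u v, g x u v = g x v u
  g_nondeg : ∀ x (v : Fib x), (∀ w, g x v w = 0) → v = 0
  g_smooth : ∀ {u v}, u ∈ secs → v ∈ secs →
    ContMDiff (𝓡 m) 𝓘(ℝ, ℝ) (⊤ : ℕ∞) (fun x => g x (u x) (v x))
  /-- the anchor `π : E → TM` -/
  anchor : ∀ x, Fib x →ₗ[ℝ] TangentSpace (𝓡 m) x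
  anchor_smooth : ∀ {u}, u ∈ secs →
    ContMDiff (𝓡 m) (𝓡 m).tangent (⊤ : ℕ∞)
      (fun x => (⟨x, anchor x (u x)⟩ : TangentBundle (𝓡 m) M))
  /-- the Dorfman bracket `[·,·]` -/
  bracket : (∀ x, Fib x) → (∀ x, Fib x) → (∀ x, Fib x)
  bracket_secs : ∀ {u v}, u ∈ secs → v ∈ secs → bracket u v ∈ secs
  bracket_add_left : ∀ {u v w}, u ∈ secs → v ∈ secs → w ∈ secs →
    bracket (fun x => u x + v x) w = fun x => bracket u w x + bracket v w x
  bracket_add_right : ∀ {u v w}, u ∈ secs → v ∈ secs → w ∈ secs →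
    bracket u (fun x => v x + w x) = fun x => bracket u v x + bracket u w x
  bracket_smul_left : ∀ (c : ℝ) {u v}, u ∈ secs → v ∈ secs →
    bracket (fun x => c • u x) v = fun x => c • bracket u v x
  bracket_smul_right : ∀ (c : ℝ) {u v}, u ∈ secs → v ∈ secs →
    bracket u (fun x => c • v x) = fun x => c • bracket u v x
  /-- `[u,[v,w]] = [[u,v],w] + [v,[u,w]]` -/
  jacobi : ∀ {u v w}, u ∈ secs → v ∈ secs → w ∈ secs →
    bracket u (bracket v w)
      = fun x => bracket (bracket u v) w x + bracket v (bracket u w) x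
  /-- `[u,fv] = f[u,v] + (π(u)f) v` -/
  leibniz : ∀ {f : M → ℝ}, ContMDiff (𝓡 m) 𝓘(ℝ, ℝ) (⊤ : ℕ∞) f → ∀ {u v},
    u ∈ secs → v ∈ secs →
    bracket u (fun x => f x • v x)
      = fun x => f x • bracket u v x
          + mdirDeriv f x (anchor x (u x)) • v x
  /-- `π(u)⟨v,w⟩ = ⟨[u,v],w⟩ + ⟨v,[u,w]⟩` -/
  compat : ∀ {u v w}, u ∈ secs → v ∈ secs → w ∈ secs → ∀ x,
    mdirDeriv (fun y => g y (v y) (w y)) x (anchor x (u x))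
      = g x (bracket u v x) (w x) + g x (v x) (bracket u w x)
  /-- `⟨[u,v]+[v,u],w⟩ = π(w)⟨u,v⟩` -/
  symBracket : ∀ {u v w}, u ∈ secs → v ∈ secs → w ∈ secs → ∀ x,
    g x (bracket u v x + bracket v u x) (w x)
      = mdirDeriv (fun y => g y (u y) (v y)) x (anchor x (w x))

attribute [instance] CourantAlgebroid.fibAdd CourantAlgebroid.fibMod CourantAlgebroid.fibFin

/-- An odd exact Courant algebroid over an `n`-dimensional manifold: a Courant algebroid
of rank `2n+1` whose scalar product has signature `(n+1, n)`. -/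
structure OddExactCourantAlgebroid (n : ℕ) (M : Type*) [TopologicalSpace M]
    [ChartedSpace (EuclideanSpace ℝ (Fin n)) M]
    [IsManifold (𝓡 n) ((⊤ : ℕ∞) : WithTop ℕ∞) M]
    extends CourantAlgebroid n M where
  rank_eq : ∀ x, Module.finrank ℝ (Fib x) = 2 * n + 1
  g_sig : ∀ x, BilinSignature (g x) (n + 1) n

variable {m : ℕ} {M : Type*} [TopologicalSpace M]
  [ChartedSpace (EuclideanSpace ℝ (Fin m)) M]
  [IsManifold (𝓡 m) ((⊤ : ℕ∞) : WithTop ℕ∞) M]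

/-- A generalized connection `D` on a Courant algebroid: `D_v (f u) = (π(v)f) u + f D_v u`
and `π(w)⟨u,v⟩ = ⟨D_w u, v⟩ + ⟨u, D_w v⟩`; moreover `D_v u` is tensorial
(`C^∞(M)`-linear) in the direction `v`. `D.D v u` denotes `D_v u`. -/
structure GenConnection (E : CourantAlgebroid m M) where
  D : (∀ x, E.Fib x) → (∀ x, E.Fib x) → (∀ x, E.Fib x)
  d_secs : ∀ {v u}, v ∈ E.secs → u ∈ E.secs → D v u ∈ E.secs
  add_dir : ∀ {v w u}, v ∈ E.secs → w ∈ E.secs → u ∈ E.secs →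
    D (fun x => v x + w x) u = fun x => D v u x + D w u x
  smul_dir : ∀ {f : M → ℝ}, ContMDiff (𝓡 m) 𝓘(ℝ, ℝ) (⊤ : ℕ∞) f → ∀ {v u},
    v ∈ E.secs → u ∈ E.secs →
    D (fun x => f x • v x) u = fun x => f x • D v u x
  add_sec : ∀ {v u w}, v ∈ E.secs → u ∈ E.secs → w ∈ E.secs →
    D v (fun x => u x + w x) = fun x => D v u x + D v w x
  smul_sec : ∀ (c : ℝ) {v u}, v ∈ E.secs → u ∈ E.secs →
    D v (fun x => c • u x) = fun x => c • D v u x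
  leibniz : ∀ {f : M → ℝ}, ContMDiff (𝓡 m) 𝓘(ℝ, ℝ) (⊤ : ℕ∞) f → ∀ {v u},
    v ∈ E.secs → u ∈ E.secs →
    D v (fun x => f x • u x)
      = fun x => mdirDeriv f x (E.anchor x (v x)) • u x + f x • D v u x
  metric : ∀ {u v w}, u ∈ E.secs → v ∈ E.secs → w ∈ E.secs → ∀ x,
    mdirDeriv (fun y => E.g y (u y) (v y)) x (E.anchor x (w x))
      = E.g x (D w u x) (v x) + E.g x (u x) (D w v x)

namespace GenConnection

variable {E : CourantAlgebroid m M}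

/-- The torsion `T^D(u,v,w) = ⟨D_u v − D_v u − [u,v], w⟩ + ⟨D_w u, v⟩` of a generalized
connection. -/
def torsion (D : GenConnection E) (u v w : ∀ x, E.Fib x) : M → ℝ :=
  fun x => E.g x (D.D u v x - D.D v u x - E.bracket u v x) (w x) + E.g x (D.D w u x) (v x)

/-- A generalized connection is torsion-free if its torsion vanishes. -/
def TorsionFree (D : GenConnection E) : Prop :=
  ∀ {u v w}, u ∈ E.secs → v ∈ E.secs → w ∈ E.secs → ∀ x, D.torsion u v w x = 0

/-- `D` preserves the endomorphism (field) `F`, i.e. `DF = 0`: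
`(D_u F) v = D_u (F v) − F (D_u v) = 0` for all sections `u`, `v`. -/
def PreservesEnd (D : GenConnection E) (F : ∀ x, E.Fib x →ₗ[ℝ] E.Fib x) : Prop :=
  ∀ {u v}, u ∈ E.secs → v ∈ E.secs → ∀ x, D.D u (fun y => F y (v y)) x = F x (D.D u v x)

/-- `D` preserves the section `s`, i.e. `Ds = 0`. -/
def PreservesSec (D : GenConnection E) (s : ∀ x, E.Fib x) : Prop :=
  ∀ {v}, v ∈ E.secs → ∀ x, D.D v s x = 0

end GenConnection

/-- The i-eigenbundle `L ⊂ E^ℂ` of a family `F` of endomorphisms has its space of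
sections closed under the (complexified) Dorfman bracket.  A complex section
`s = u + iv` of `E^ℂ` lies in `Γ(L)` iff `F u = -v` and `F v = u`; the bracket of
`u + iv` and `u' + iv'` is `([u,u'] - [v,v']) + i([u,v'] + [v,u'])`. -/
def CourantAlgebroid.IntegrableF (E : CourantAlgebroid m M)
    (F : ∀ x, E.Fib x →ₗ[ℝ] E.Fib x) : Prop :=
  ∀ {u v u' v'}, u ∈ E.secs → v ∈ E.secs → u' ∈ E.secs → v' ∈ E.secs →
    (∀ x, F x (u x) = -(v x)) → (∀ x, F x (v x) = u x) →
    (∀ x, F x (u' x) = -(v' x)) → (∀ x, F x (v' x) = u' x) →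
    (∀ x, F x (E.bracket u u' x - E.bracket v v' x)
        = -(E.bracket u v' x + E.bracket v u' x)) ∧
    (∀ x, F x (E.bracket u v' x + E.bracket v u' x)
        = E.bracket u u' x - E.bracket v v' x)

/-- A generalized (admissible) metric on a Courant algebroid, described by the associated
orthogonal, `⟨·,·⟩`-symmetric involution `G^end` of `E`; its `−1`-eigenbundle `E₋`
(the subbundle defining the generalized metric) is required to have nondegenerate
scalar product and anchor restricting to an isomorphism `E₋ → TM`. -/
structure GenMetric (E : CourantAlgebroid m M) where
  Gend : ∀ x, E.Fib x →ₗ[ℝ] E.Fib x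
  smooth : ∀ {u}, u ∈ E.secs → (fun x => Gend x (u x)) ∈ E.secs
  symm : ∀ x u v, E.g x (Gend x u) v = E.g x u (Gend x v)
  invol : ∀ x v, Gend x (Gend x v) = v
  nondeg_minus : ∀ x (v : E.Fib x), Gend x v = -v →
    (∀ w, Gend x w = -w → E.g x v w = 0) → v = 0
  anchor_bij : ∀ x, Function.Bijective
    (fun v : {w : E.Fib x // Gend x w = -w} => E.anchor x v.1)

/-- `DG = 0`, i.e. `π(w) G(u,v) = G(D_w u, v) + G(u, D_w v)` where
`G(u,v) = ⟨G^end u, v⟩`. -/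
def GenConnection.PreservesMetric {E : CourantAlgebroid m M}
    (D : GenConnection E) (G : GenMetric E) : Prop :=
  ∀ {u v w}, u ∈ E.secs → v ∈ E.secs → w ∈ E.secs → ∀ x,
    mdirDeriv (fun y => E.g y (G.Gend y (u y)) (v y)) x (E.anchor x (w x))
      = E.g x (G.Gend x (D.D w u x)) (v x) + E.g x (G.Gend x (u x)) (D.D w v x)

/-- A `Bₙ`-generalized almost complex structure on an odd exact Courant algebroid `E`
over an `n`-dimensional manifold: a `⟨·,·⟩`-skew-symmetric endomorphism `𝓕` of rank `2n`
satisfying `𝓕² = −Id + (−1)ⁿ ⟨·,u₀⟩ u₀` for a section `u₀` with `⟨u₀,u₀⟩ = (−1)ⁿ`. -/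
structure BnGACS {n : ℕ} {M' : Type*} [TopologicalSpace M']
    [ChartedSpace (EuclideanSpace ℝ (Fin n)) M']
    [IsManifold (𝓡 n) ((⊤ : ℕ∞) : WithTop ℕ∞) M']
    (E : OddExactCourantAlgebroid n M') where
  F : ∀ x, E.Fib x →ₗ[ℝ] E.Fib x
  smooth : ∀ {u}, u ∈ E.secs → (fun x => F x (u x)) ∈ E.secs
  skew : ∀ x u v, E.g x (F x u) v = - E.g x u (F x v)
  u₀ : ∀ x, E.Fib x
  u₀_mem : u₀ ∈ E.secs
  u₀_norm : ∀ x, E.g x (u₀ x) (u₀ x) = (-1 : ℝ) ^ n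
  F_sq : ∀ x v, F x (F x v) = -v + ((-1 : ℝ) ^ n * E.g x v (u₀ x)) • u₀ x
  rank_F : ∀ x, Module.finrank ℝ (LinearMap.range (F x)) = 2 * n

namespace BnGACS

variable {n : ℕ} {M' : Type*} [TopologicalSpace M']
  [ChartedSpace (EuclideanSpace ℝ (Fin n)) M']
  [IsManifold (𝓡 n) ((⊤ : ℕ∞) : WithTop ℕ∞) M']
  {E : OddExactCourantAlgebroid n M'}

/-- `𝓕` applied to a section. -/
def ap (J : BnGACS E) (u : ∀ x, E.Fib x) : ∀ x, E.Fib x := fun x => J.F x (u x)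

/-- Integrability of a `Bₙ`-generalized almost complex structure: the sections of its
i-eigenbundle `L ⊂ E^ℂ` are closed under the Dorfman bracket. -/
def Integrable (J : BnGACS E) : Prop :=
  CourantAlgebroid.IntegrableF E.toCourantAlgebroid J.F

/-- `u ∈ Γ(U^⊥)`, where `U = Ker 𝓕` is spanned by `u₀`. -/
def Perp (J : BnGACS E) (u : ∀ x, E.Fib x) : Prop :=
  ∀ x, E.g x (u x) (J.u₀ x) = 0

/-- The Nijenhuis tensor `N_𝓕(u,v) = [𝓕u,𝓕v] − [u,v] − 𝓕([𝓕u,v] + [u,𝓕v])`. -/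
def Nij (J : BnGACS E) (u v : ∀ x, E.Fib x) : ∀ x, E.Fib x :=
  fun x => E.bracket (J.ap u) (J.ap v) x - E.bracket u v x
    - J.F x (E.bracket (J.ap u) v x + E.bracket u (J.ap v) x)

/-- The Dorfman-Lie derivative `(𝐋_{u₀} 𝓕) u = [u₀, 𝓕u] − 𝓕 [u₀, u]`. -/
def lieF (J : BnGACS E) (u : ∀ x, E.Fib x) : ∀ x, E.Fib x :=
  fun x => E.bracket J.u₀ (J.ap u) x - J.F x (E.bracket J.u₀ u x)

/-- The covariant derivative `(D_u 𝓕) v = D_u (𝓕 v) − 𝓕 (D_u v)`. -/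
def covF (J : BnGACS E) (D : GenConnection E.toCourantAlgebroid)
    (u v : ∀ x, E.Fib x) : ∀ x, E.Fib x :=
  fun x => D.D u (J.ap v) x - J.F x (D.D u v x)

end BnGACS

/-- A generalized (almost) complex structure on a Courant algebroid of even rank:
a `⟨·,·⟩`-skew-symmetric endomorphism `𝓙` with `𝓙² = −Id`, whose i-eigenbundle has
sections closed under the Dorfman bracket. -/
structure GenComplex (E : CourantAlgebroid m M) where
  J : ∀ x, E.Fib x →ₗ[ℝ] E.Fib x
  smooth : ∀ {u}, u ∈ E.secs → (fun x => J x (u x)) ∈ E.secs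
  skew : ∀ x u v, E.g x (J x u) v = - E.g x u (J x v)
  sq : ∀ x v, J x (J x v) = -v
  integrable : CourantAlgebroid.IntegrableF E J

end

variable {n : ℕ} {M : Type*} [TopologicalSpace M]
  [ChartedSpace (EuclideanSpace ℝ (Fin n)) M]
  [IsManifold (𝓡 n) ((⊤ : ℕ∞) : WithTop ℕ∞) M]


noncomputable section CoreAlgebra

variable {V : Type} [AddCommGroup V] [Module ℝ V]

/-- real part shape -/
private def Ash (F : V →ₗ[ℝ] V) (c : V → V → V → ℝ) : V → V → V → ℝ := fun x y z =>
  c x y z - c (F x) (F y) z + c (F x) y (F z) + c x (F y) (F z)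

/-- imaginary part shape -/
private def Bsh (F : V →ₗ[ℝ] V) (c : V → V → V → ℝ) : V → V → V → ℝ := fun x y z =>
  -c (F x) y z - c x (F y) z + c x y (F z) - c (F x) (F y) (F z)

private def fpl (F G : V →ₗ[ℝ] V) (c : V → V → V → ℝ) : V → V → V → ℂ := fun u v w =>
  ((Ash F c (u + G u) (v + G v) (w + G w)) / 32 : ℝ)
    + ((Bsh F c (u + G u) (v + G v) (w + G w)) / 32 : ℝ) * Complex.I

private def fml (F G : V →ₗ[ℝ] V) (c : V → V → V → ℝ) : V → V → V → ℂ := fun u v w =>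
  ((Ash F c (u - G u) (v - G v) (w - G w)) / 32 : ℝ)
    + ((Bsh F c (u - G u) (v - G v) (w - G w)) / 32 : ℝ) * Complex.I

/-- generic builder of a trilinear map -/
private def mkTri3 (f : V → V → V → ℂ)
    (h1 : ∀ y z, IsLinearMap ℝ (fun x => f x y z))
    (h2 : ∀ x z, IsLinearMap ℝ (fun y => f x y z))
    (h3 : ∀ x y, IsLinearMap ℝ (fun z => f x y z)) :
    V →ₗ[ℝ] V →ₗ[ℝ] V →ₗ[ℝ] ℂ where
  toFun x :=
    { toFun := fun y => IsLinearMap.mk' (f x y) (h3 x y)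
      map_add' := fun y y' => by
        ext z
        simpa using (h2 x z).map_add y y'
      map_smul' := fun r y => by
        ext z
        simpa using (h2 x z).map_smul r y }
  map_add' x x' := by
    ext y z
    simpa using (h1 y z).map_add x x'
  map_smul' r x := by
    ext y z
    simpa using (h1 y z).map_smul r x

private lemma core_alg (F G : V →ₗ[ℝ] V) (c : V → V → V → ℝ)
    (hFG : ∀ z, G (F z) = F (G z))
    (hG2 : ∀ z, G (G z) = z)
    (hl1 : ∀ y z, IsLinearMap ℝ (fun x => c x y z))
    (hl2 : ∀ x z, IsLinearMap ℝ (fun y => c x y z))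
    (hl3 : ∀ x y, IsLinearMap ℝ (fun z => c x y z))
    (R1 : ∀ x y z, c x y z = -(c x z y))
    (R2 : ∀ x y z, c x y z - c y x z + c z x y = 0)
    (R3 : ∀ x y z, c x (F y) z = -(c x y (F z)))
    (R4 : ∀ x y z, c x (G y) z = c x y (G z))
    (R5c : ∀ x y z, c x y (F (F z)) = -(c x y z)) :
    ∃ ηp ηm : V →ₗ[ℝ] V →ₗ[ℝ] V →ₗ[ℝ] ℂ,
      (∀ u v w, ηp u v w = ηp v u w) ∧
      (∀ u v w, ηp (F u) v w = Complex.I * ηp u v w) ∧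
      (∀ u v w, ηp u (F v) w = Complex.I * ηp u v w) ∧
      (∀ u v w, ηp u v (F w) = -(Complex.I * ηp u v w)) ∧
      (∀ u v w, ηp (G u) v w = ηp u v w) ∧
      (∀ u v w, ηp u (G v) w = ηp u v w) ∧
      (∀ u v w, ηp u v (G w) = ηp u v w) ∧
      (∀ u v w, ηm u v w = ηm v u w) ∧
      (∀ u v w, ηm (F u) v w = Complex.I * ηm u v w) ∧
      (∀ u v w, ηm u (F v) w = Complex.I * ηm u v w) ∧
      (∀ u v w, ηm u v (F w) = -(Complex.I * ηm u v w)) ∧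
      (∀ u v w, ηm (G u) v w = -(ηm u v w)) ∧
      (∀ u v w, ηm u (G v) w = -(ηm u v w)) ∧
      (∀ u v w, ηm u v (G w) = -(ηm u v w)) ∧
      (∀ u v w, c u v w
        = ((ηp u v w - ηp u w v) + (ηm u v w - ηm u w v)).re) := by
  -- plain linearity lemmas for `c`
  have ca1 : ∀ x x' y z, c (x + x') y z = c x y z + c x' y z :=
    fun x x' y z => (hl1 y z).map_add x x'
  have ca2 : ∀ x y y' z, c x (y + y') z = c x y z + c x y' z :=
    fun x y y' z => (hl2 x z).map_add y y'
  have ca3 : ∀ x y z z', c x y (z + z') = c x y z + c x y z' :=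
    fun x y z z' => (hl3 x y).map_add z z'
  have cb1 : ∀ x x' y z, c (x - x') y z = c x y z - c x' y z :=
    fun x x' y z => (hl1 y z).map_sub x x'
  have cb2 : ∀ x y y' z, c x (y - y') z = c x y z - c x y' z :=
    fun x y y' z => (hl2 x z).map_sub y y'
  have cb3 : ∀ x y z z', c x y (z - z') = c x y z - c x y z' :=
    fun x y z z' => (hl3 x y).map_sub z z'
  have cn1 : ∀ x y z, c (-x) y z = -(c x y z) := fun x y z => (hl1 y z).map_neg x
  have cn2 : ∀ x y z, c x (-y) z = -(c x y z) := fun x y z => (hl2 x z).map_neg y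
  have cn3 : ∀ x y z, c x y (-z) = -(c x y z) := fun x y z => (hl3 x y).map_neg z
  have cs1 : ∀ (r : ℝ) x y z, c (r • x) y z = r * c x y z := fun r x y z => by
    simpa [smul_eq_mul] using (hl1 y z).map_smul r x
  have cs2 : ∀ (r : ℝ) x y z, c x (r • y) z = r * c x y z := fun r x y z => by
    simpa [smul_eq_mul] using (hl2 x z).map_smul r y
  have cs3 : ∀ (r : ℝ) x y z, c x y (r • z) = r * c x y z := fun r x y z => by
    simpa [smul_eq_mul] using (hl3 x y).map_smul r z
  -- derived relations
  have cG2b : ∀ x y z, c x (G (G y)) z = c x y z := fun x y z => by rw [hG2]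
  have R5b : ∀ x y z, c x (F (F y)) z = -(c x y z) := fun x y z => by
    linear_combination (R1 x y z) + (R1 x z (F (F y))) - (R5c x z y)
  have R5a : ∀ x y z, c (F (F x)) y z = -(c x y z) := fun x y z => by
    linear_combination (R1 y x z) - (R1 z x y) + (R2 x y z) + (R2 y z (F (F x)))
      - (R5c y z x) + (R5c z y x)
  -- shape identities
  have symA : ∀ x y z, Ash F c x y z = Ash F c y x z := by
    intro x y z
    simp only [Ash]
    linear_combination 2 * (R1 (F z) y (F x)) + 2 * (R2 x (F y) (F z))
      - 2 * (R2 y (F x) (F z)) - (R3 x (F y) z) + (R3 y (F x) z) - (R3 (F x) y z)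
      + (R3 (F y) x z) - 2 * (R3 (F z) x y) + (R5b x y z) - (R5b y x z)
  have symB : ∀ x y z, Bsh F c x y z = Bsh F c y x z := by
    intro x y z
    simp only [Bsh]
    linear_combination -2 * (R1 x z (F y)) + 2 * (R1 y z (F x)) - 2 * (R1 z y (F x))
      + 2 * (R2 x z (F y)) - 2 * (R2 y z (F x)) + (R3 x y z) - (R3 y x z)
      + 2 * (R3 z x y) - (R3 (F x) (F y) z) + (R3 (F y) (F x) z)
      + (R5b (F x) y z) - (R5b (F y) x z)
  have FA1 : ∀ x y z, Ash F c (F x) y z = -(Bsh F c x y z) := by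
    intro x y z
    simp only [Ash, Bsh]
    linear_combination (R5a x y (F z)) - (R5a x (F y) z)
  have FB1 : ∀ x y z, Bsh F c (F x) y z = Ash F c x y z := by
    intro x y z
    simp only [Ash, Bsh]
    linear_combination -(R5a x y z) - (R5a x (F y) (F z))
  have FA2 : ∀ x y z, Ash F c x (F y) z = -(Bsh F c x y z) := by
    intro x y z
    simp only [Ash, Bsh]
    linear_combination (R5b x y (F z)) - (R5b (F x) y z)
  have FB2 : ∀ x y z, Bsh F c x (F y) z = Ash F c x y z := by
    intro x y z
    simp only [Ash, Bsh]
    linear_combination -(R5b x y z) - (R5b (F x) y (F z))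
  have FA3 : ∀ x y z, Ash F c x y (F z) = Bsh F c x y z := by
    intro x y z
    simp only [Ash, Bsh]
    linear_combination (R3 x y z) + (R3 x (F y) (F z)) + (R3 (F x) y (F z))
      - (R3 (F x) (F y) z) - (R5b x y (F z)) + (R5b (F x) y z)
  have FB3 : ∀ x y z, Bsh F c x y (F z) = -(Ash F c x y z) := by
    intro x y z
    simp only [Ash, Bsh]
    linear_combination (R3 x y (F z)) - (R3 x (F y) z) - (R3 (F x) y z)
      - (R3 (F x) (F y) (F z)) + (R5b x y z) + (R5b (F x) y (F z))
  -- negation lemmas for shapes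
  have AshN1 : ∀ x y z, Ash F c (-x) y z = -(Ash F c x y z) := by
    intro x y z; simp only [Ash, map_neg, cn1]; ring
  have AshN2 : ∀ x y z, Ash F c x (-y) z = -(Ash F c x y z) := by
    intro x y z; simp only [Ash, map_neg, cn2]; ring
  have AshN3 : ∀ x y z, Ash F c x y (-z) = -(Ash F c x y z) := by
    intro x y z; simp only [Ash, map_neg, cn3]; ring
  have BshN1 : ∀ x y z, Bsh F c (-x) y z = -(Bsh F c x y z) := by
    intro x y z; simp only [Bsh, map_neg, cn1]; ring
  have BshN2 : ∀ x y z, Bsh F c x (-y) z = -(Bsh F c x y z) := by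
    intro x y z; simp only [Bsh, map_neg, cn2]; ring
  have BshN3 : ∀ x y z, Bsh F c x y (-z) = -(Bsh F c x y z) := by
    intro x y z; simp only [Bsh, map_neg, cn3]; ring
  -- additivity/smul of shapes
  have AshA1 : ∀ x x' y z, Ash F c (x + x') y z = Ash F c x y z + Ash F c x' y z := by
    intro x x' y z; simp only [Ash, map_add, ca1]; ring
  have AshA2 : ∀ x y y' z, Ash F c x (y + y') z = Ash F c x y z + Ash F c x y' z := by
    intro x y y' z; simp only [Ash, map_add, ca2]; ring
  have AshA3 : ∀ x y z z', Ash F c x y (z + z') = Ash F c x y z + Ash F c x y z' := by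
    intro x y z z'; simp only [Ash, map_add, ca3]; ring
  have BshA1 : ∀ x x' y z, Bsh F c (x + x') y z = Bsh F c x y z + Bsh F c x' y z := by
    intro x x' y z; simp only [Bsh, map_add, ca1]; ring
  have BshA2 : ∀ x y y' z, Bsh F c x (y + y') z = Bsh F c x y z + Bsh F c x y' z := by
    intro x y y' z; simp only [Bsh, map_add, ca2]; ring
  have BshA3 : ∀ x y z z', Bsh F c x y (z + z') = Bsh F c x y z + Bsh F c x y z' := by
    intro x y z z'; simp only [Bsh, map_add, ca3]; ring
  have AshS1 : ∀ (r : ℝ) x y z, Ash F c (r • x) y z = r * Ash F c x y z := by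
    intro r x y z; simp only [Ash, map_smul, cs1]; ring
  have AshS2 : ∀ (r : ℝ) x y z, Ash F c x (r • y) z = r * Ash F c x y z := by
    intro r x y z; simp only [Ash, map_smul, cs2]; ring
  have AshS3 : ∀ (r : ℝ) x y z, Ash F c x y (r • z) = r * Ash F c x y z := by
    intro r x y z; simp only [Ash, map_smul, cs3]; ring
  have BshS1 : ∀ (r : ℝ) x y z, Bsh F c (r • x) y z = r * Bsh F c x y z := by
    intro r x y z; simp only [Bsh, map_smul, cs1]; ring
  have BshS2 : ∀ (r : ℝ) x y z, Bsh F c x (r • y) z = r * Bsh F c x y z := by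
    intro r x y z; simp only [Bsh, map_smul, cs2]; ring
  have BshS3 : ∀ (r : ℝ) x y z, Bsh F c x y (r • z) = r * Bsh F c x y z := by
    intro r x y z; simp only [Bsh, map_smul, cs3]; ring
  -- elementary vector identities
  have hgpF : ∀ u : V, F u + G (F u) = F (u + G u) := by
    intro u; rw [hFG, ← map_add]
  have hgmF : ∀ u : V, F u - G (F u) = F (u - G u) := by
    intro u; rw [hFG, ← map_sub]
  have hgpG : ∀ u : V, G u + G (G u) = u + G u := by
    intro u; rw [hG2, add_comm]
  have hgmG : ∀ u : V, G u - G (G u) = -(u - G u) := by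
    intro u; rw [hG2, neg_sub]
  -- linearity of fpl and fml
  have hfp1 : ∀ v w, IsLinearMap ℝ (fun u => fpl F G c u v w) := by
    intro v w
    constructor
    · intro u u'
      simp only [fpl]
      rw [show u + u' + G (u + u') = (u + G u) + (u' + G u') by rw [map_add]; abel,
        AshA1, BshA1]
      push_cast
      ring
    · intro r u
      simp only [fpl, RingHom.id_apply]
      rw [show r • u + G (r • u) = r • (u + G u) by rw [map_smul, smul_add],
        AshS1, BshS1, Complex.real_smul]
      push_cast
      ring
  have hfp2 : ∀ u w, IsLinearMap ℝ (fun v => fpl F G c u v w) := by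
    intro u w
    constructor
    · intro v v'
      simp only [fpl]
      rw [show v + v' + G (v + v') = (v + G v) + (v' + G v') by rw [map_add]; abel,
        AshA2, BshA2]
      push_cast
      ring
    · intro r v
      simp only [fpl, RingHom.id_apply]
      rw [show r • v + G (r • v) = r • (v + G v) by rw [map_smul, smul_add],
        AshS2, BshS2, Complex.real_smul]
      push_cast
      ring
  have hfp3 : ∀ u v, IsLinearMap ℝ (fun w => fpl F G c u v w) := by
    intro u v
    constructor
    · intro w w'
      simp only [fpl]
      rw [show w + w' + G (w + w') = (w + G w) + (w' + G w') by rw [map_add]; abel,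
        AshA3, BshA3]
      push_cast
      ring
    · intro r w
      simp only [fpl, RingHom.id_apply]
      rw [show r • w + G (r • w) = r • (w + G w) by rw [map_smul, smul_add],
        AshS3, BshS3, Complex.real_smul]
      push_cast
      ring
  have hfm1 : ∀ v w, IsLinearMap ℝ (fun u => fml F G c u v w) := by
    intro v w
    constructor
    · intro u u'
      simp only [fml]
      rw [show u + u' - G (u + u') = (u - G u) + (u' - G u') by rw [map_add]; abel,
        AshA1, BshA1]
      push_cast
      ring
    · intro r u
      simp only [fml, RingHom.id_apply]
      rw [show r • u - G (r • u) = r • (u - G u) by rw [map_smul, smul_sub],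
        AshS1, BshS1, Complex.real_smul]
      push_cast
      ring
  have hfm2 : ∀ u w, IsLinearMap ℝ (fun v => fml F G c u v w) := by
    intro u w
    constructor
    · intro v v'
      simp only [fml]
      rw [show v + v' - G (v + v') = (v - G v) + (v' - G v') by rw [map_add]; abel,
        AshA2, BshA2]
      push_cast
      ring
    · intro r v
      simp only [fml, RingHom.id_apply]
      rw [show r • v - G (r • v) = r • (v - G v) by rw [map_smul, smul_sub],
        AshS2, BshS2, Complex.real_smul]
      push_cast
      ring
  have hfm3 : ∀ u v, IsLinearMap ℝ (fun w => fml F G c u v w) := by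
    intro u v
    constructor
    · intro w w'
      simp only [fml]
      rw [show w + w' - G (w + w') = (w - G w) + (w' - G w') by rw [map_add]; abel,
        AshA3, BshA3]
      push_cast
      ring
    · intro r w
      simp only [fml, RingHom.id_apply]
      rw [show r • w - G (r • w) = r • (w - G w) by rw [map_smul, smul_sub],
        AshS3, BshS3, Complex.real_smul]
      push_cast
      ring
  -- the fifteen properties for the unbundled functions
  have Psym : ∀ u v w, fpl F G c u v w = fpl F G c v u w := by
    intro u v w
    simp only [fpl]
    rw [symA (u + G u) (v + G v), symB (u + G u) (v + G v)]
  have PF1 : ∀ u v w, fpl F G c (F u) v w = Complex.I * fpl F G c u v w := by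
    intro u v w
    simp only [fpl]
    rw [hgpF, FA1, FB1]
    push_cast
    linear_combination (-(Bsh F c (u + G u) (v + G v) (w + G w) : ℂ) / 32) * Complex.I_sq
  have PF2 : ∀ u v w, fpl F G c u (F v) w = Complex.I * fpl F G c u v w := by
    intro u v w
    simp only [fpl]
    rw [hgpF, FA2, FB2]
    push_cast
    linear_combination (-(Bsh F c (u + G u) (v + G v) (w + G w) : ℂ) / 32) * Complex.I_sq
  have PF3 : ∀ u v w, fpl F G c u v (F w) = -(Complex.I * fpl F G c u v w) := by
    intro u v w
    simp only [fpl]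
    rw [hgpF, FA3, FB3]
    push_cast
    linear_combination ((Bsh F c (u + G u) (v + G v) (w + G w) : ℂ) / 32) * Complex.I_sq
  have PG1 : ∀ u v w, fpl F G c (G u) v w = fpl F G c u v w := by
    intro u v w; simp only [fpl]; rw [hgpG]
  have PG2 : ∀ u v w, fpl F G c u (G v) w = fpl F G c u v w := by
    intro u v w; simp only [fpl]; rw [hgpG]
  have PG3 : ∀ u v w, fpl F G c u v (G w) = fpl F G c u v w := by
    intro u v w; simp only [fpl]; rw [hgpG]
  have Msym : ∀ u v w, fml F G c u v w = fml F G c v u w := by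
    intro u v w
    simp only [fml]
    rw [symA (u - G u) (v - G v), symB (u - G u) (v - G v)]
  have MF1 : ∀ u v w, fml F G c (F u) v w = Complex.I * fml F G c u v w := by
    intro u v w
    simp only [fml]
    rw [hgmF, FA1, FB1]
    push_cast
    linear_combination (-(Bsh F c (u - G u) (v - G v) (w - G w) : ℂ) / 32) * Complex.I_sq
  have MF2 : ∀ u v w, fml F G c u (F v) w = Complex.I * fml F G c u v w := by
    intro u v w
    simp only [fml]
    rw [hgmF, FA2, FB2]
    push_cast
    linear_combination (-(Bsh F c (u - G u) (v - G v) (w - G w) : ℂ) / 32) * Complex.I_sq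
  have MF3 : ∀ u v w, fml F G c u v (F w) = -(Complex.I * fml F G c u v w) := by
    intro u v w
    simp only [fml]
    rw [hgmF, FA3, FB3]
    push_cast
    linear_combination ((Bsh F c (u - G u) (v - G v) (w - G w) : ℂ) / 32) * Complex.I_sq
  have MG1 : ∀ u v w, fml F G c (G u) v w = -(fml F G c u v w) := by
    intro u v w
    simp only [fml]
    rw [hgmG, AshN1, BshN1]
    push_cast
    ring
  have MG2 : ∀ u v w, fml F G c u (G v) w = -(fml F G c u v w) := by
    intro u v w
    simp only [fml]
    rw [hgmG, AshN2, BshN2]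
    push_cast
    ring
  have MG3 : ∀ u v w, fml F G c u v (G w) = -(fml F G c u v w) := by
    intro u v w
    simp only [fml]
    rw [hgmG, AshN3, BshN3]
    push_cast
    ring
  -- reconstruction
  have recon : ∀ u v w,
      Ash F c (u + G u) (v + G v) (w + G w) - Ash F c (u + G u) (w + G w) (v + G v)
        + Ash F c (u - G u) (v - G v) (w - G w)
        - Ash F c (u - G u) (w - G w) (v - G v) = 32 * c u v w := by
    intro u v w
    simp only [Ash, map_add, map_sub, ca1, ca2, ca3, cb1, cb2, cb3]
    linear_combination 16 * (cG2b u v w) + 8 * (cG2b v u w) - 8 * (cG2b w u v)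
      - 2 * (R1 u v w) - 2 * (R1 u (F v) (F w)) - 2 * (R1 u (F (G v)) (F (G w)))
      - 2 * (R1 u (G v) (G w))
      + 2 * (R1 (F u) v (F w)) - 2 * (R1 (F u) (F v) w)
      - 2 * (R1 (F u) (F (G v)) (G w)) + 2 * (R1 (F u) (G v) (F (G w)))
      + 2 * (R1 (F (G u)) v (F (G w))) - 2 * (R1 (F (G u)) (F v) (G w))
      - 2 * (R1 (F (G u)) (F (G v)) w) + 2 * (R1 (F (G u)) (G v) (F w))
      - 2 * (R1 (G u) v (G w)) - 2 * (R1 (G u) (F v) (F (G w)))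
      - 2 * (R1 (G u) (F (G v)) (F w)) - 2 * (R1 (G u) (G v) w)
      - 8 * (R2 u v w) - 8 * (R2 u (G v) (G w)) + 8 * (R2 (G u) v (G w))
      + 8 * (R2 (G u) (G v) w)
      + 4 * (R3 u (F v) w) + 4 * (R3 u (F (G v)) (G w)) + 4 * (R3 (G u) (F v) (G w))
      + 4 * (R3 (G u) (F (G v)) w)
      - 16 * (R4 u (G v) w) - 8 * (R4 v (G u) w) + 8 * (R4 w (G u) v)
      + 8 * (R4 (G v) u w) - 8 * (R4 (G w) u v)
      - 4 * (R5b u v w) - 4 * (R5b u (G v) (G w)) - 4 * (R5b (G u) v (G w))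
      - 4 * (R5b (G u) (G v) w)
  refine ⟨mkTri3 (fpl F G c) hfp1 hfp2 hfp3, mkTri3 (fml F G c) hfm1 hfm2 hfm3,
    Psym, PF1, PF2, PF3, PG1, PG2, PG3, Msym, MF1, MF2, MF3, MG1, MG2, MG3, ?_⟩
  intro u v w
  have h := recon u v w
  show c u v w = ((fpl F G c u v w - fpl F G c u w v)
    + (fml F G c u v w - fml F G c u w v)).re
  simp only [fpl, fml, Complex.add_re, Complex.sub_re, Complex.ofReal_re,
    Complex.mul_re, Complex.I_re, Complex.I_im, Complex.ofReal_im]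
  linarith
end CoreAlgebra

set_option maxHeartbeats 3200000 in
/-- Let `(G,𝓕)` be a `Bₙ`-generalized pseudo-Kähler structure on an
odd exact Courant algebroid `E`.  Any two `Bₙ`-Kähler generalized connections `D, D̃`
(torsion-free with `DG = 0` and `D𝓕 = 0`) are related by `D̃ = D + Re(sk(η₊ + η₋))`
for some `η_± ∈ Γ(S²E_{±,𝓕}* ⊗ Ē_{±,𝓕}*)`, where `E_{±,𝓕} = E_±^ℂ ∩ L`.  The `η_±`
are encoded as families of ℝ-trilinear complex-valued forms; the `𝓕`-conditions place
each argument in `L` resp. `L̄`, and the `G^end`-conditions place the arguments of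
`η_±` in `E_±^ℂ` (extension by zero via
`E^ℂ = E_{+,𝓕} ⊕ Ē_{+,𝓕} ⊕ E_{−,𝓕} ⊕ Ē_{−,𝓕} ⊕ U^ℂ`). -/
theorem bn_kaehler_connections_difference
    (E : OddExactCourantAlgebroid n M) (J : BnGACS E)
    (G : GenMetric E.toCourantAlgebroid)
    (hcomm : ∀ x v, G.Gend x (J.F x v) = J.F x (G.Gend x v))
    (hint₁ : CourantAlgebroid.IntegrableF E.toCourantAlgebroid J.F)
    (hint₂ : CourantAlgebroid.IntegrableF E.toCourantAlgebroid
      (fun x => (G.Gend x) ∘ₗ (J.F x)))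
    (D Dt : GenConnection E.toCourantAlgebroid)
    (hD : D.TorsionFree ∧ D.PreservesMetric G ∧ D.PreservesEnd J.F)
    (hDt : Dt.TorsionFree ∧ Dt.PreservesMetric G ∧ Dt.PreservesEnd J.F) :
    ∃ ηp ηm : ∀ x, E.Fib x →ₗ[ℝ] E.Fib x →ₗ[ℝ] E.Fib x →ₗ[ℝ] ℂ,
      (∀ x u v w, ηp x u v w = ηp x v u w) ∧
      (∀ x u v w, ηp x (J.F x u) v w = Complex.I * ηp x u v w) ∧
      (∀ x u v w, ηp x u (J.F x v) w = Complex.I * ηp x u v w) ∧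
      (∀ x u v w, ηp x u v (J.F x w) = -(Complex.I * ηp x u v w)) ∧
      (∀ x u v w, ηp x (G.Gend x u) v w = ηp x u v w) ∧
      (∀ x u v w, ηp x u (G.Gend x v) w = ηp x u v w) ∧
      (∀ x u v w, ηp x u v (G.Gend x w) = ηp x u v w) ∧
      (∀ x u v w, ηm x u v w = ηm x v u w) ∧
      (∀ x u v w, ηm x (J.F x u) v w = Complex.I * ηm x u v w) ∧
      (∀ x u v w, ηm x u (J.F x v) w = Complex.I * ηm x u v w) ∧
      (∀ x u v w, ηm x u v (J.F x w) = -(Complex.I * ηm x u v w)) ∧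
      (∀ x u v w, ηm x (G.Gend x u) v w = -(ηm x u v w)) ∧
      (∀ x u v w, ηm x u (G.Gend x v) w = -(ηm x u v w)) ∧
      (∀ x u v w, ηm x u v (G.Gend x w) = -(ηm x u v w)) ∧
      ∀ u v w, u ∈ E.secs → v ∈ E.secs → w ∈ E.secs → ∀ x,
        E.g x (Dt.D u v x) (w x)
          = E.g x (D.D u v x) (w x)
            + ((ηp x (u x) (v x) (w x) - ηp x (u x) (w x) (v x))
                + (ηm x (u x) (v x) (w x) - ηm x (u x) (w x) (v x))).re := by
  classical
  obtain ⟨hDtor, hDmet, hDFp⟩ := hD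
  obtain ⟨hTtor, hTmet, hTFp⟩ := hDt
  -- smooth sections form a submodule of the product module
  set Γ : Submodule ℝ (∀ y, E.Fib y) :=
    { carrier := E.secs
      add_mem' := fun ha hb => E.secs_add ha hb
      zero_mem' := E.secs_zero
      smul_mem' := fun r u hu => E.secs_smul contMDiff_const hu } with hΓdef
  have hΓmem : ∀ {s : ∀ y, E.Fib y}, s ∈ Γ ↔ s ∈ E.secs := fun {s} => Iff.rfl
  clear_value Γ
  clear hΓdef
  have hpow : ((-1 : ℝ) ^ n) * ((-1 : ℝ) ^ n) = 1 := by
    rw [← pow_add]; exact Even.neg_one_pow ⟨n, rfl⟩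
  have key : ∀ x : M, ∃ ηp ηm : E.Fib x →ₗ[ℝ] E.Fib x →ₗ[ℝ] E.Fib x →ₗ[ℝ] ℂ,
      (∀ u v w, ηp u v w = ηp v u w) ∧
      (∀ u v w, ηp (J.F x u) v w = Complex.I * ηp u v w) ∧
      (∀ u v w, ηp u (J.F x v) w = Complex.I * ηp u v w) ∧
      (∀ u v w, ηp u v (J.F x w) = -(Complex.I * ηp u v w)) ∧
      (∀ u v w, ηp (G.Gend x u) v w = ηp u v w) ∧
      (∀ u v w, ηp u (G.Gend x v) w = ηp u v w) ∧
      (∀ u v w, ηp u v (G.Gend x w) = ηp u v w) ∧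
      (∀ u v w, ηm u v w = ηm v u w) ∧
      (∀ u v w, ηm (J.F x u) v w = Complex.I * ηm u v w) ∧
      (∀ u v w, ηm u (J.F x v) w = Complex.I * ηm u v w) ∧
      (∀ u v w, ηm u v (J.F x w) = -(Complex.I * ηm u v w)) ∧
      (∀ u v w, ηm (G.Gend x u) v w = -(ηm u v w)) ∧
      (∀ u v w, ηm u (G.Gend x v) w = -(ηm u v w)) ∧
      (∀ u v w, ηm u v (G.Gend x w) = -(ηm u v w)) ∧
      (∀ u v w, u ∈ E.secs → v ∈ E.secs → w ∈ E.secs →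
        E.g x (Dt.D u v x) (w x)
          = E.g x (D.D u v x) (w x)
            + ((ηp (u x) (v x) (w x) - ηp (u x) (w x) (v x))
                + (ηm (u x) (v x) (w x) - ηm (u x) (w x) (v x))).re) := by
    intro x
    set θ : (∀ y, E.Fib y) → (∀ y, E.Fib y) → E.Fib x :=
      fun s t => Dt.D s t x - D.D s t x with hθ
    clear_value θ
    have L1 : ∀ {u v w}, u ∈ E.secs → v ∈ E.secs → w ∈ E.secs →
        E.g x (θ u v) (w x) = -(E.g x (θ u w) (v x)) := by
      intro u v w hu hv hw
      have h1 := D.metric hv hw hu x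
      have h2 := Dt.metric hv hw hu x
      have h3 := h1.symm.trans h2
      have s1 := E.g_symm x (v x) (Dt.D u w x)
      have s2 := E.g_symm x (v x) (D.D u w x)
      simp only [hθ, map_sub, LinearMap.sub_apply]
      linarith
    have L2 : ∀ {u v w}, u ∈ E.secs → v ∈ E.secs → w ∈ E.secs →
        E.g x (θ u v) (w x) - E.g x (θ v u) (w x) + E.g x (θ w u) (v x) = 0 := by
      intro u v w hu hv hw
      have t1 := hDtor hu hv hw x
      have t2 := hTtor hu hv hw x
      simp only [GenConnection.torsion, map_sub, LinearMap.sub_apply] at t1 t2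
      simp only [hθ, map_sub, LinearMap.sub_apply]
      linarith
    have L3 : ∀ {u v}, u ∈ E.secs → v ∈ E.secs →
        θ u (J.ap v) = J.F x (θ u v) := by
      intro u v hu hv
      have h1 := hDFp hu hv x
      have h2 := hTFp hu hv x
      simp only [hθ]
      rw [show Dt.D u (J.ap v) x = J.F x (Dt.D u v x) from h2,
        show D.D u (J.ap v) x = J.F x (D.D u v x) from h1, ← map_sub]
    have L4 : ∀ {u v w}, u ∈ E.secs → v ∈ E.secs → w ∈ E.secs →
        E.g x (θ u (fun y => G.Gend y (v y))) (w x)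
          = E.g x (G.Gend x (θ u v)) (w x) := by
      intro u v w hu hv hw
      have h1 := D.metric (G.smooth hv) hw hu x
      have h2 := hDmet hv hw hu x
      have h12 : E.g x (D.D u (fun y => G.Gend y (v y)) x) (w x)
            + E.g x (G.Gend x (v x)) (D.D u w x)
          = E.g x (G.Gend x (D.D u v x)) (w x)
            + E.g x (G.Gend x (v x)) (D.D u w x) := h1.symm.trans h2
      have h3 := Dt.metric (G.smooth hv) hw hu x
      have h4 := hTmet hv hw hu x
      have h34 : E.g x (Dt.D u (fun y => G.Gend y (v y)) x) (w x)
            + E.g x (G.Gend x (v x)) (Dt.D u w x)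
          = E.g x (G.Gend x (Dt.D u v x)) (w x)
            + E.g x (G.Gend x (v x)) (Dt.D u w x) := h3.symm.trans h4
      simp only [hθ, map_sub, LinearMap.sub_apply]
      linarith
    have hD0 : ∀ {u}, u ∈ E.secs → D.D u (fun y => (0 : E.Fib y)) x = 0 := by
      intro u hu
      have h := D.smul_sec 0 hu hu
      have e : (fun y => (0 : ℝ) • u y) = (fun y => (0 : E.Fib y)) := by
        funext y; simp
      rw [e] at h
      rw [h]
      simp
    have hT0 : ∀ {u}, u ∈ E.secs → Dt.D u (fun y => (0 : E.Fib y)) x = 0 := by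
      intro u hu
      have h := Dt.smul_sec 0 hu hu
      have e : (fun y => (0 : ℝ) • u y) = (fun y => (0 : E.Fib y)) := by
        funext y; simp
      rw [e] at h
      rw [h]
      simp
    have hzfun : J.ap (J.ap J.u₀) = (fun y => (0 : E.Fib y)) := by
      funext y
      show J.F y (J.F y (J.u₀ y)) = 0
      rw [J.F_sq y (J.u₀ y), J.u₀_norm y, hpow]
      simp
    have L5 : ∀ {u}, u ∈ E.secs → θ u J.u₀ = 0 := by
      intro u hu
      have hm1 : J.ap J.u₀ ∈ E.secs := J.smooth J.u₀_mem
      have hstep : θ u (J.ap (J.ap J.u₀)) = J.F x (J.F x (θ u J.u₀)) := by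
        rw [L3 hu hm1, L3 hu J.u₀_mem]
      have h0 : θ u (J.ap (J.ap J.u₀)) = 0 := by
        simp only [hθ]
        rw [hzfun, hT0 hu, hD0 hu, sub_zero]
      have hFF : J.F x (J.F x (θ u J.u₀)) = 0 := hstep.symm.trans h0
      have hg0 : E.g x (θ u J.u₀) (J.u₀ x) = 0 := by
        have h := L1 hu J.u₀_mem J.u₀_mem
        linarith
      have h := J.F_sq x (θ u J.u₀)
      rw [hg0, mul_zero, zero_smul, add_zero, hFF] at h
      exact neg_eq_zero.mp h.symm
    have Wv : ∀ {u v w}, u ∈ E.secs → v ∈ E.secs → w ∈ E.secs → v x = 0 →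
        E.g x (θ u v) (w x) = 0 := by
      intro u v w hu hv hw h0
      rw [L1 hu hv hw, h0]
      simp
    have Wu : ∀ {u v w}, u ∈ E.secs → v ∈ E.secs → w ∈ E.secs → u x = 0 →
        E.g x (θ u v) (w x) = 0 := by
      intro u v w hu hv hw h0
      have l2 := L2 hu hv hw
      have a1 : E.g x (θ v u) (w x) = 0 := by rw [L1 hv hu hw, h0]; simp
      have a2 : E.g x (θ w u) (v x) = 0 := by rw [L1 hw hu hv, h0]; simp
      linarith
    have θaddl : ∀ {s s' t}, s ∈ E.secs → s' ∈ E.secs → t ∈ E.secs →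
        θ (s + s') t = θ s t + θ s' t := by
      intro s s' t hs hs' ht
      have e1 : Dt.D (s + s') t x = Dt.D s t x + Dt.D s' t x :=
        congrFun (Dt.add_dir hs hs' ht) x
      have e2 : D.D (s + s') t x = D.D s t x + D.D s' t x :=
        congrFun (D.add_dir hs hs' ht) x
      simp only [hθ]
      rw [e1, e2]; abel
    have θsmull : ∀ (r : ℝ) {s t}, s ∈ E.secs → t ∈ E.secs →
        θ (r • s) t = r • θ s t := by
      intro r s t hs ht
      have e1 : Dt.D (r • s) t x = r • Dt.D s t x :=
        congrFun (Dt.smul_dir contMDiff_const hs ht) x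
      have e2 : D.D (r • s) t x = r • D.D s t x :=
        congrFun (D.smul_dir contMDiff_const hs ht) x
      simp only [hθ]
      rw [e1, e2, smul_sub]
    have θaddr : ∀ {s t t'}, s ∈ E.secs → t ∈ E.secs → t' ∈ E.secs →
        θ s (t + t') = θ s t + θ s t' := by
      intro s t t' hs ht ht'
      have e1 : Dt.D s (t + t') x = Dt.D s t x + Dt.D s t' x :=
        congrFun (Dt.add_sec hs ht ht') x
      have e2 : D.D s (t + t') x = D.D s t x + D.D s t' x :=
        congrFun (D.add_sec hs ht ht') x
      simp only [hθ]
      rw [e1, e2]; abel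
    have θsmulr : ∀ (r : ℝ) {s t}, s ∈ E.secs → t ∈ E.secs →
        θ s (r • t) = r • θ s t := by
      intro r s t hs ht
      have e1 : Dt.D s (r • t) x = r • Dt.D s t x :=
        congrFun (Dt.smul_sec r hs ht) x
      have e2 : D.D s (r • t) x = r • D.D s t x :=
        congrFun (D.smul_sec r hs ht) x
      simp only [hθ]
      rw [e1, e2, smul_sub]
    have θsubl : ∀ {s s' t}, s ∈ E.secs → s' ∈ E.secs → t ∈ E.secs →
        θ (s - s') t = θ s t - θ s' t := by
      intro s s' t hs hs' ht
      have hneg : (-1 : ℝ) • s' ∈ E.secs := hΓmem.mp (Γ.smul_mem (-1) (hΓmem.mpr hs'))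
      have e : s - s' = s + (-1 : ℝ) • s' := by rw [neg_one_smul]; abel
      rw [e, θaddl hs hneg ht, θsmull (-1) hs' ht, neg_one_smul]
      abel
    have θsubr : ∀ {s t t'}, s ∈ E.secs → t ∈ E.secs → t' ∈ E.secs →
        θ s (t - t') = θ s t - θ s t' := by
      intro s t t' hs ht ht'
      have hneg : (-1 : ℝ) • t' ∈ E.secs := hΓmem.mp (Γ.smul_mem (-1) (hΓmem.mpr ht'))
      have e : t - t' = t + (-1 : ℝ) • t' := by rw [neg_one_smul]; abel
      rw [e, θaddr hs ht hneg, θsmulr (-1) hs ht', neg_one_smul]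
      abel
    -- the subspace of values of sections at x
    set evx : (∀ y, E.Fib y) →ₗ[ℝ] E.Fib x := LinearMap.proj x with hevx
    set Sx : Submodule ℝ (E.Fib x) := Submodule.map evx Γ with hSxdef
    have hmemS : ∀ {s}, s ∈ E.secs → s x ∈ Sx :=
      fun {s} hs => Submodule.mem_map_of_mem (p := Γ) (hΓmem.mpr hs)
    have hFS : ∀ a ∈ Sx, J.F x a ∈ Sx := by
      intro a ha
      obtain ⟨s, hs, he⟩ := Submodule.mem_map.mp ha
      subst he
      exact Submodule.mem_map_of_mem (p := Γ) (hΓmem.mpr (J.smooth (hΓmem.mp hs)))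
    have hGS : ∀ a ∈ Sx, G.Gend x a ∈ Sx := by
      intro a ha
      obtain ⟨s, hs, he⟩ := Submodule.mem_map.mp ha
      subst he
      exact Submodule.mem_map_of_mem (p := Γ) (hΓmem.mpr (G.smooth (hΓmem.mp hs)))
    -- F(u₀) = 0 and F³ = -F
    have hgFu0 : E.g x (J.F x (J.u₀ x)) (J.u₀ x) = 0 := by
      have h1 := J.skew x (J.u₀ x) (J.u₀ x)
      have h2 := E.g_symm x (J.u₀ x) (J.F x (J.u₀ x))
      linarith
    have hFFu0 : J.F x (J.F x (J.u₀ x)) = 0 := by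
      rw [J.F_sq, J.u₀_norm, hpow]
      simp
    have hFu0 : J.F x (J.u₀ x) = 0 := by
      have h := J.F_sq x (J.F x (J.u₀ x))
      rw [hgFu0, mul_zero, zero_smul, add_zero] at h
      have h2 : J.F x (J.F x (J.F x (J.u₀ x))) = 0 := by rw [hFFu0, map_zero]
      exact neg_eq_zero.mp (h.symm.trans h2)
    have hF3 : ∀ v, J.F x (J.F x (J.F x v)) = -(J.F x v) := by
      intro v
      have h := J.F_sq x (J.F x v)
      have hg : E.g x (J.F x v) (J.u₀ x) = 0 := by
        have hs := J.skew x v (J.u₀ x)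
        rw [hFu0] at hs
        simpa using hs
      rw [hg, mul_zero, zero_smul, add_zero] at h
      exact h
    -- an (F,G)-equivariant projection onto Sx
    obtain ⟨qc, hqc⟩ := Submodule.exists_isCompl Sx
    set pr0 : E.Fib x →ₗ[ℝ] Sx := Sx.linearProjOfIsCompl qc hqc with hpr0
    set P0 : E.Fib x →ₗ[ℝ] E.Fib x := Sx.subtype ∘ₗ pr0 with hP0
    have hP0S : ∀ a ∈ Sx, P0 a = a := by
      intro a ha
      show (↑(pr0 a) : E.Fib x) = a
      rw [show pr0 a = ⟨a, ha⟩ from Submodule.linearProjOfIsCompl_apply_left hqc ⟨a, ha⟩]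
    have hP0R : ∀ v, P0 v ∈ Sx := fun v => (pr0 v).2
    set pG : E.Fib x →ₗ[ℝ] E.Fib x :=
      (1/2 : ℝ) • (P0 + (G.Gend x) ∘ₗ P0 ∘ₗ (G.Gend x)) with hpGdef
    set Qx : E.Fib x →ₗ[ℝ] E.Fib x := -((J.F x) ∘ₗ (J.F x)) with hQxdef
    set Nx : E.Fib x →ₗ[ℝ] E.Fib x := LinearMap.id - Qx with hNxdef
    set p : E.Fib x →ₗ[ℝ] E.Fib x :=
      Nx ∘ₗ pG ∘ₗ Nx + (1/2 : ℝ) • (Qx ∘ₗ pG ∘ₗ Qx - (J.F x) ∘ₗ pG ∘ₗ (J.F x))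
      with hpdef
    have hQap : ∀ v, Qx v = -(J.F x (J.F x v)) := by
      intro v
      simp only [hQxdef, LinearMap.neg_apply, LinearMap.comp_apply]
    have hNap : ∀ v, Nx v = v - Qx v := by
      intro v
      simp only [hNxdef, LinearMap.sub_apply, LinearMap.id_apply]
    have hpGap : ∀ v, pG v = (1/2 : ℝ) • (P0 v + G.Gend x (P0 (G.Gend x v))) := by
      intro v
      simp only [hpGdef, LinearMap.smul_apply, LinearMap.add_apply, LinearMap.comp_apply]
    have hpap : ∀ v, p v = Nx (pG (Nx v))
        + (1/2 : ℝ) • (Qx (pG (Qx v)) - J.F x (pG (J.F x v))) := by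
      intro v
      simp only [hpdef, LinearMap.add_apply, LinearMap.comp_apply,
        LinearMap.smul_apply, LinearMap.sub_apply]
    clear_value pr0 P0 pG Qx Nx p
    have hQF : ∀ v, Qx (J.F x v) = J.F x v := by
      intro v; rw [hQap, hF3, neg_neg]
    have hFQ : ∀ v, J.F x (Qx v) = J.F x v := by
      intro v; rw [hQap, map_neg, hF3, neg_neg]
    have hQQ : ∀ v, Qx (Qx v) = Qx v := by
      intro v
      rw [hQap (Qx v), hQap v]
      simp only [map_neg, neg_neg]
      exact hF3 (J.F x v)
    have hGQ : ∀ v, G.Gend x (Qx v) = Qx (G.Gend x v) := by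
      intro v
      rw [hQap, hQap, map_neg, hcomm, hcomm]
    have hGN : ∀ v, G.Gend x (Nx v) = Nx (G.Gend x v) := by
      intro v
      rw [hNap, hNap, map_sub, hGQ]
    have hNF : ∀ v, Nx (J.F x v) = 0 := by
      intro v; rw [hNap, hQF, sub_self]
    have hFN : ∀ v, J.F x (Nx v) = 0 := by
      intro v; rw [hNap, map_sub, hFQ, sub_self]
    have hNN : ∀ v, Nx (Nx v) = Nx v := by
      intro v
      have hQN : Qx (Nx v) = 0 := by
        rw [hNap v, map_sub, hQQ, sub_self]
      rw [hNap (Nx v), hQN, sub_zero]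
    have hQS : ∀ a ∈ Sx, Qx a ∈ Sx := by
      intro a ha; rw [hQap]; exact Sx.neg_mem (hFS _ (hFS _ ha))
    have hNS : ∀ a ∈ Sx, Nx a ∈ Sx := by
      intro a ha; rw [hNap]; exact Sx.sub_mem ha (hQS a ha)
    have hpGS : ∀ a ∈ Sx, pG a = a := by
      intro a ha
      rw [hpGap, hP0S a ha, hP0S _ (hGS _ ha), G.invol]
      module
    have hpGR : ∀ v, pG v ∈ Sx := by
      intro v
      rw [hpGap]
      exact Sx.smul_mem _ (Sx.add_mem (hP0R _) (hGS _ (hP0R _)))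
    have hpGG : ∀ v, pG (G.Gend x v) = G.Gend x (pG v) := by
      intro v
      rw [hpGap, hpGap, map_smul, map_add, G.invol, G.invol]
      abel
    have hpS : ∀ a ∈ Sx, p a = a := by
      intro a ha
      rw [hpap, hpGS _ (hNS a ha), hNN, hpGS _ (hQS a ha), hQQ, hpGS _ (hFS _ ha)]
      rw [hNap a, hQap a]
      module
    have hpR : ∀ v, p v ∈ Sx := by
      intro v
      rw [hpap]
      exact Sx.add_mem (hNS _ (hpGR _))
        (Sx.smul_mem _ (Sx.sub_mem (hQS _ (hpGR _)) (hFS _ (hpGR _))))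
    have hpF : ∀ v, p (J.F x v) = J.F x (p v) := by
      intro v
      have e1 : J.F x (J.F x v) = -(Qx v) := by rw [hQap, neg_neg]
      have e2 : J.F x (J.F x (pG (J.F x v))) = -(Qx (pG (J.F x v))) := by
        rw [hQap, neg_neg]
      rw [hpap, hpap]
      rw [hNF, map_zero, map_zero, zero_add]
      rw [hQF, e1, map_neg, map_neg, sub_neg_eq_add]
      rw [map_add, map_smul, map_sub, hFN, zero_add, hFQ, e2, sub_neg_eq_add]
      abel
    have hpGc : ∀ v, p (G.Gend x v) = G.Gend x (p v) := by
      intro v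
      rw [hpap, hpap]
      rw [show Nx (G.Gend x v) = G.Gend x (Nx v) from (hGN v).symm]
      rw [hpGG, show Nx (G.Gend x (pG (Nx v))) = G.Gend x (Nx (pG (Nx v))) from
        (hGN _).symm]
      rw [show Qx (G.Gend x v) = G.Gend x (Qx v) from (hGQ v).symm]
      rw [hpGG, show Qx (G.Gend x (pG (Qx v))) = G.Gend x (Qx (pG (Qx v))) from
        (hGQ _).symm]
      rw [show J.F x (G.Gend x v) = G.Gend x (J.F x v) from (hcomm x v).symm]
      rw [hpGG, show J.F x (G.Gend x (pG (J.F x v)))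
          = G.Gend x (J.F x (pG (J.F x v))) from (hcomm x _).symm]
      simp only [map_add, map_smul, map_sub]
    -- a linear choice of sections through points of Sx
    have hchoice : ∀ a : Sx, ∃ s : Γ, (s : ∀ y, E.Fib y) x = (a : E.Fib x) := by
      rintro ⟨a, ha⟩
      obtain ⟨s, hs, he⟩ := Submodule.mem_map.mp ha
      exact ⟨⟨s, hs⟩, he⟩
    set σsec : Sx → Γ := fun a => (hchoice a).choose with hσdef
    have hσsec : ∀ a : Sx, ((σsec a : ∀ y, E.Fib y)) x = (a : E.Fib x) :=
      fun a => (hchoice a).choose_spec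
    set bS := Module.Basis.ofVectorSpace ℝ Sx with hbSdef
    set Lf : Sx →ₗ[ℝ] Γ := (bS.constr ℝ) (fun i => σsec (bS i)) with hLfdef
    have hLf : ∀ a : Sx, ((Lf a : ∀ y, E.Fib y)) x = (a : E.Fib x) := by
      have heq : (evx ∘ₗ (Γ.subtype ∘ₗ Lf)) = Sx.subtype := by
        apply bS.ext
        intro i
        simp only [LinearMap.comp_apply]
        rw [hLfdef, Module.Basis.constr_basis]
        exact hσsec (bS i)
      intro a
      exact LinearMap.congr_fun heq a
    set p' : E.Fib x →ₗ[ℝ] Sx := LinearMap.codRestrict Sx p hpR with hp'def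
    set sec : E.Fib x →ₗ[ℝ] (∀ y, E.Fib y) := Γ.subtype ∘ₗ Lf ∘ₗ p' with hsecdef
    have hsecmem : ∀ v, sec v ∈ E.secs := by
      intro v
      simp only [hsecdef, LinearMap.comp_apply]
      exact hΓmem.mp (Lf (p' v)).2
    have hsecval : ∀ v, sec v x = p v := by
      intro v
      simp only [hsecdef, LinearMap.comp_apply]
      exact hLf (p' v)
    clear_value p' sec
    clear_value σsec bS Lf
    set c : E.Fib x → E.Fib x → E.Fib x → ℝ :=
      fun a b e => E.g x (θ (sec a) (sec b)) (p e) with hcdef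
    clear_value c
    have hl1 : ∀ b e, IsLinearMap ℝ (fun a => c a b e) := by
      intro b e
      constructor
      · intro a a'
        simp only [hcdef]
        rw [map_add, θaddl (hsecmem a) (hsecmem a') (hsecmem b), map_add,
          LinearMap.add_apply]
      · intro r a
        simp only [hcdef]
        rw [map_smul, θsmull r (hsecmem a) (hsecmem b), map_smul,
          LinearMap.smul_apply]
    have hl2 : ∀ a e, IsLinearMap ℝ (fun b => c a b e) := by
      intro a e
      constructor
      · intro b b'
        simp only [hcdef]
        rw [map_add, θaddr (hsecmem a) (hsecmem b) (hsecmem b'), map_add,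
          LinearMap.add_apply]
      · intro r b
        simp only [hcdef]
        rw [map_smul, θsmulr r (hsecmem a) (hsecmem b), map_smul,
          LinearMap.smul_apply]
    have hl3 : ∀ a b, IsLinearMap ℝ (fun e => c a b e) := by
      intro a b
      constructor
      · intro e e'
        simp only [hcdef]
        rw [map_add, map_add]
      · intro r e
        simp only [hcdef]
        rw [map_smul, map_smul]
    have R1 : ∀ a b e, c a b e = -(c a e b) := by
      intro a b e
      simp only [hcdef]
      have h := L1 (hsecmem a) (hsecmem b) (hsecmem e)
      rw [hsecval b, hsecval e] at h
      exact h
    have R2 : ∀ a b e, c a b e - c b a e + c e a b = 0 := by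
      intro a b e
      simp only [hcdef]
      have h := L2 (hsecmem a) (hsecmem b) (hsecmem e)
      rw [hsecval b, hsecval e] at h
      exact h
    have R3 : ∀ a b e, c a (J.F x b) e = -(c a b (J.F x e)) := by
      intro a b e
      have hms : sec (J.F x b) ∈ E.secs := hsecmem _
      have hma : J.ap (sec b) ∈ E.secs := J.smooth (hsecmem b)
      have hsub : sec (J.F x b) - J.ap (sec b) ∈ E.secs := hΓmem.mp (Γ.sub_mem (hΓmem.mpr hms) (hΓmem.mpr hma))
      have hveq : (sec (J.F x b) - J.ap (sec b)) x = 0 := by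
        show sec (J.F x b) x - J.ap (sec b) x = 0
        rw [hsecval]
        show p (J.F x b) - J.F x (sec b x) = 0
        rw [hpF, hsecval, sub_self]
      have h0 : E.g x (θ (sec a) (sec (J.F x b) - J.ap (sec b))) ((sec e) x) = 0 :=
        Wv (hsecmem a) hsub (hsecmem e) hveq
      rw [θsubr (hsecmem a) hms hma, map_sub, LinearMap.sub_apply, hsecval e] at h0
      have hL3 := L3 (hsecmem a) (hsecmem b)
      simp only [hcdef]
      rw [show E.g x (θ (sec a) (sec (J.F x b))) (p e)
          = E.g x (θ (sec a) (J.ap (sec b))) (p e) from by linarith]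
      rw [hL3, J.skew, ← hpF]
    have R4 : ∀ a b e, c a (G.Gend x b) e = c a b (G.Gend x e) := by
      intro a b e
      have hms : sec (G.Gend x b) ∈ E.secs := hsecmem _
      have hma : (fun y => G.Gend y (sec b y)) ∈ E.secs := G.smooth (hsecmem b)
      have hsub : sec (G.Gend x b) - (fun y => G.Gend y (sec b y)) ∈ E.secs :=
        hΓmem.mp (Γ.sub_mem (hΓmem.mpr hms) (hΓmem.mpr hma))
      have hveq : (sec (G.Gend x b) - (fun y => G.Gend y (sec b y))) x = 0 := by
        show sec (G.Gend x b) x - G.Gend x (sec b x) = 0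
        rw [hsecval, hsecval, hpGc, sub_self]
      have h0 : E.g x (θ (sec a) (sec (G.Gend x b) - (fun y => G.Gend y (sec b y))))
          ((sec e) x) = 0 := Wv (hsecmem a) hsub (hsecmem e) hveq
      rw [θsubr (hsecmem a) hms hma, map_sub, LinearMap.sub_apply, hsecval e] at h0
      have hL4 := L4 (hsecmem a) (hsecmem b) (hsecmem e)
      rw [hsecval e] at hL4
      simp only [hcdef]
      rw [show E.g x (θ (sec a) (sec (G.Gend x b))) (p e)
          = E.g x (θ (sec a) (fun y => G.Gend y (sec b y))) (p e) from by linarith]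
      rw [hL4, G.symm, ← hpGc]
    have R5c : ∀ a b e, c a b (J.F x (J.F x e)) = -(c a b e) := by
      intro a b e
      have hu0 : E.g x (θ (sec a) (sec b)) (J.u₀ x) = 0 := by
        have h := L1 (hsecmem a) (hsecmem b) J.u₀_mem
        rw [L5 (hsecmem a)] at h
        simpa using h
      simp only [hcdef]
      rw [hpF, hpF, J.F_sq x (p e)]
      rw [map_add, map_neg, map_smul, hu0, smul_zero, add_zero]
    have hook : ∀ {u v w}, u ∈ E.secs → v ∈ E.secs → w ∈ E.secs →
        E.g x (θ u v) (w x) = c (u x) (v x) (w x) := by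
      intro u v w hu hv hw
      have hpw : p (w x) = w x := hpS _ (hmemS hw)
      have hd1 : (sec (u x) - u) x = 0 := by
        show sec (u x) x - u x = 0
        rw [hsecval, hpS _ (hmemS hu), sub_self]
      have h1 : E.g x (θ (sec (u x) - u) (sec (v x))) (w x) = 0 :=
        Wu (hΓmem.mp (Γ.sub_mem (hΓmem.mpr (hsecmem _)) (hΓmem.mpr hu))) (hsecmem _) hw hd1
      rw [θsubl (hsecmem _) hu (hsecmem _), map_sub, LinearMap.sub_apply] at h1
      have hd2 : (sec (v x) - v) x = 0 := by
        show sec (v x) x - v x = 0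
        rw [hsecval, hpS _ (hmemS hv), sub_self]
      have h2 : E.g x (θ u (sec (v x) - v)) (w x) = 0 :=
        Wv hu (hΓmem.mp (Γ.sub_mem (hΓmem.mpr (hsecmem _)) (hΓmem.mpr hv))) hw hd2
      rw [θsubr hu (hsecmem _) hv, map_sub, LinearMap.sub_apply] at h2
      simp only [hcdef]
      rw [hpw]
      linarith
    obtain ⟨ηp, ηm, B1, B2, B3, B4, B5, B6, B7, B8, B9, B10, B11, B12, B13, B14, B15⟩ :=
      core_alg (J.F x) (G.Gend x) c (fun z => hcomm x z) (G.invol x)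
        hl1 hl2 hl3 R1 R2 R3 R4 R5c
    refine ⟨ηp, ηm, B1, B2, B3, B4, B5, B6, B7, B8, B9, B10, B11, B12, B13, B14, ?_⟩
    intro u v w hu hv hw
    have hk := hook hu hv hw
    have hr := B15 (u x) (v x) (w x)
    have hexp : E.g x (θ u v) (w x)
        = E.g x (Dt.D u v x) (w x) - E.g x (D.D u v x) (w x) := by
      simp only [hθ]
      rw [map_sub, LinearMap.sub_apply]
    linarith
  choose ηp ηm hkey using key
  exact ⟨ηp, ηm, fun x => (hkey x).1, fun x => (hkey x).2.1, fun x => (hkey x).2.2.1,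
    fun x => (hkey x).2.2.2.1, fun x => (hkey x).2.2.2.2.1,
    fun x => (hkey x).2.2.2.2.2.1,
    fun x => (hkey x).2.2.2.2.2.2.1, fun x => (hkey x).2.2.2.2.2.2.2.1,
    fun x => (hkey x).2.2.2.2.2.2.2.2.1, fun x => (hkey x).2.2.2.2.2.2.2.2.2.1,
    fun x => (hkey x).2.2.2.2.2.2.2.2.2.2.1,
    fun x => (hkey x).2.2.2.2.2.2.2.2.2.2.2.1,
    fun x => (hkey x).2.2.2.2.2.2.2.2.2.2.2.2.1,
    fun x => (hkey x).2.2.2.2.2.2.2.2.2.2.2.2.2.1,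
    fun u v w hu hv hw x =>
      (hkey x).2.2.2.2.2.2.2.2.2.2.2.2.2.2 u v w hu hv hw⟩
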